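/- For every complex number s with Re(s) ≥ 1, the partial sum ζ_3(s) = 1 + 2^{-s} + 3^{-s} is nonzero. -/

import Mathlib

theorem zeta3_ne_zero (s : ℂ) (hs : 1 ≤ s.re) :
    1 + (2 : ℂ) ^ (-s) + (3 : ℂ) ^ (-s) ≠ 0 := by
  intro h
  have h2 : ‖(2 : ℂ) ^ (-s)‖ = (2 : ℝ) ^ (-s.re) := by
    rw [show (2 : ℂ) = ((2 : ℝ) : ℂ) by norm_num,
      Complex.norm_cpow_eq_rpow_re_of_pos (by norm_num)]
    simp
  have h3 : ‖(3 : ℂ) ^ (-s)‖ = (3 : ℝ) ^ (-s.re) := by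
    rw [show (3 : ℂ) = ((3 : ℝ) : ℂ) by norm_num,
      Complex.norm_cpow_eq_rpow_re_of_pos (by norm_num)]
    simp
  have b2 : (2 : ℝ) ^ (-s.re) ≤ (2 : ℝ) ^ (-1 : ℝ) :=
    Real.rpow_le_rpow_of_exponent_le (by norm_num) (by linarith)
  have b3 : (3 : ℝ) ^ (-s.re) ≤ (3 : ℝ) ^ (-1 : ℝ) :=
    Real.rpow_le_rpow_of_exponent_le (by norm_num) (by linarith)
  have e2 : (2 : ℝ) ^ (-1 : ℝ) = 1/2 := by
    rw [Real.rpow_neg_one]; norm_num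
  have e3 : (3 : ℝ) ^ (-1 : ℝ) = 1/3 := by
    rw [Real.rpow_neg_one]; norm_num
  have h1 : (1 : ℂ) = -((2 : ℂ) ^ (-s) + (3 : ℂ) ^ (-s)) := by
    linear_combination h
  have := congrArg (‖·‖) h1
  simp only [norm_one, norm_neg] at this
  have htri := norm_add_le ((2 : ℂ) ^ (-s)) ((3 : ℂ) ^ (-s))
  rw [h2, h3] at htri
  rw [e2] at b2; rw [e3] at b3
  linarith [this, htri]
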